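/- Let n ≥ 2 be an integer, p₁, p₂ > n, [a,b] ⊂ (0,1), cᵢ := ((pᵢ−n)/(pᵢ−1))(1−b)a^{n/(pᵢ−1)}, and let Kᵢ := {v ∈ C([0,1]) : v ≥ 0 on [0,1], v nonincreasing on [0,1], and min_{r∈[a,b]} v(r) ≥ cᵢ‖v‖_∞} (i = 1,2), K := K₁ × K₂. Let f₁, f₂ : ℝ₊² → ℝ₊ be continuous and nondecreasing (fᵢ(u₁,v₁) ≤ fᵢ(u₂,v₂) whenever u₁ ≤ u₂ and v₁ ≤ v₂). Then the operator T = (T₁,T₂) defined by Tᵢ(u₁,u₂)(r) = ∫ᵣ¹ φ_{pᵢ}^{−1}( s^{1−n} ∫₀ˢ τ^{n−1} fᵢ(u₁(τ),u₂(τ)) dτ ) ds maps K into K; that is, for every (u₁,u₂) ∈ K and i = 1,2, the function Tᵢ(u₁,u₂) is continuous, nonnegative, nonincreasing on [0,1], and satisfies min_{r∈[a,b]} Tᵢ(u₁,u₂)(r) ≥ cᵢ‖Tᵢ(u₁,u₂)‖_∞. -/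

import Mathlib

open Set

/-- The inverse of the `p`-Laplacian homeomorphism `φ_p(t) = |t|^{p-2} t`,
namely `φ_p⁻¹(s) = sign(s) |s|^{1/(p-1)}`. -/
noncomputable def pLapInv (p s : ℝ) : ℝ := Real.sign s * |s| ^ (1 / (p - 1))

/-- The fixed point operator associated with the radial `p`-Laplacian system:
`T(u₁,u₂)(r) = ∫ᵣ¹ φ_p⁻¹( s^{1-n} ∫₀ˢ τ^{n-1} f(u₁(τ),u₂(τ)) dτ ) ds`. -/
noncomputable def radialT (n : ℕ) (p : ℝ) (f : ℝ → ℝ → ℝ) (u₁ u₂ : ℝ → ℝ)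
    (r : ℝ) : ℝ :=
  ∫ s in r..1,
    pLapInv p ((1 / s ^ (n - 1)) * ∫ τ in (0:ℝ)..s, τ ^ (n - 1) * f (u₁ τ) (u₂ τ))

lemma pLapInv_of_nonneg {p x : ℝ} (hp : 1 < p) (hx : 0 ≤ x) :
    pLapInv p x = x ^ (1 / (p - 1)) := by
  rcases hx.lt_or_eq with h | h
  · rw [pLapInv, Real.sign_of_pos h, abs_of_pos h, one_mul]
  · rw [← h, pLapInv, Real.sign_zero, zero_mul,
      Real.zero_rpow (one_div_pos.mpr (by linarith)).ne']

theorem radialT_aux (n : ℕ) (hn : 2 ≤ n) (p : ℝ) (hp : (n : ℝ) < p)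
    (a b : ℝ) (ha : 0 < a) (hab : a ≤ b) (hb : b < 1)
    (c : ℝ) (hc : c = (p - n) / (p - 1) * (1 - b) * a ^ ((n : ℝ) / (p - 1)))
    (h : ℝ → ℝ) (hcont : ContinuousOn h (Icc 0 1))
    (hpos : ∀ t ∈ Icc (0:ℝ) 1, 0 ≤ h t)
    (hanti : AntitoneOn h (Icc 0 1))
    (T : ℝ → ℝ)
    (hT : T = fun r => ∫ s in r..1,
      pLapInv p ((1 / s ^ (n - 1)) * ∫ τ in (0:ℝ)..s, τ ^ (n - 1) * h τ)) :
    ContinuousOn T (Icc 0 1) ∧ (∀ r ∈ Icc (0:ℝ) 1, 0 ≤ T r) ∧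
      AntitoneOn T (Icc 0 1) ∧
      ∀ r ∈ Icc a b, c * sSup ((fun s => |T s|) '' Icc (0:ℝ) 1) ≤ T r := by
  have hnR : (2:ℝ) ≤ (n:ℝ) := by exact_mod_cast hn
  have hp1 : 1 < p := by linarith
  have hp0 : (0:ℝ) < p - 1 := by linarith
  have hpn : (0:ℝ) < p - n := by linarith
  set q : ℝ := 1 / (p - 1) with hqdef
  have hq : 0 < q := by positivity
  set m : ℕ := n - 1 with hmdef
  have hmn : m + 1 = n := Nat.sub_add_cancel (by omega)
  have hmR : (m:ℝ) = (n:ℝ) - 1 := by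
    have := Nat.cast_sub (show 1 ≤ n by omega) (R := ℝ); simpa using this
  have ha1 : a < 1 := lt_of_le_of_lt hab hb
  have hb0 : 0 < b := lt_of_lt_of_le ha hab
  have h01 : (0:ℝ) ∈ Icc (0:ℝ) 1 := by constructor <;> norm_num
  have h11 : (1:ℝ) ∈ Icc (0:ℝ) 1 := by constructor <;> norm_num
  have hamem : a ∈ Icc (0:ℝ) 1 := ⟨ha.le, ha1.le⟩
  have hbmem : b ∈ Icc (0:ℝ) 1 := ⟨hb0.le, hb.le⟩
  set H : ℝ → ℝ := fun τ => τ ^ m * h τ with hHdef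
  have hH_cont : ContinuousOn H (Icc 0 1) :=
    (continuous_pow m).continuousOn.mul hcont
  have hH_int : ∀ s t : ℝ, s ∈ Icc (0:ℝ) 1 → t ∈ Icc (0:ℝ) 1 →
      IntervalIntegrable H MeasureTheory.volume s t := fun s t hs ht =>
    (hH_cont.mono (uIcc_subset_Icc hs ht)).intervalIntegrable
  have hH_nonneg : ∀ τ ∈ Icc (0:ℝ) 1, 0 ≤ H τ := fun τ hτ =>
    mul_nonneg (pow_nonneg hτ.1 m) (hpos τ hτ)
  set F : ℝ → ℝ := fun s => ∫ τ in (0:ℝ)..s, H τ with hFdef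
  have hF0 : F 0 = 0 := intervalIntegral.integral_same
  have hF_nonneg : ∀ s ∈ Icc (0:ℝ) 1, 0 ≤ F s := by
    intro s hs
    exact intervalIntegral.integral_nonneg hs.1
      (fun τ hτ => hH_nonneg τ ⟨hτ.1, hτ.2.trans hs.2⟩)
  have hF_mono : ∀ s t : ℝ, s ∈ Icc (0:ℝ) 1 → t ∈ Icc (0:ℝ) 1 → s ≤ t →
      F s ≤ F t := by
    intro s t hs ht hst
    have hadd := intervalIntegral.integral_add_adjacent_intervals
      (hH_int 0 s h01 hs) (hH_int s t hs ht)
    have hnn : (0:ℝ) ≤ ∫ τ in s..t, H τ :=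
      intervalIntegral.integral_nonneg hst
        (fun τ hτ => hH_nonneg τ ⟨hs.1.trans hτ.1, hτ.2.trans ht.2⟩)
    have ht' : F t = F s + ∫ τ in s..t, H τ := hadd.symm
    linarith
  have hF_cont : ContinuousOn F (Icc 0 1) := by
    have := intervalIntegral.continuousOn_primitive_interval'
      (μ := MeasureTheory.volume) (b₁ := (0:ℝ)) (b₂ := 1)
      (hH_int 0 1 h01 h11) (by rw [uIcc_of_le (zero_le_one)]; exact h01)
    rwa [uIcc_of_le (zero_le_one : (0:ℝ) ≤ 1)] at this
  set A : ℝ → ℝ := fun s => (1 / s ^ m) * F s with hAdef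
  have hA_nonneg : ∀ s ∈ Icc (0:ℝ) 1, 0 ≤ A s := fun s hs =>
    mul_nonneg (one_div_nonneg.mpr (pow_nonneg hs.1 m)) (hF_nonneg s hs)
  have hA0 : A 0 = 0 := by
    show (1 / (0:ℝ) ^ m) * F 0 = 0
    rw [hF0, mul_zero]
  -- upper bound F s ≤ s^m * (h 0 * s)
  have hF_upper : ∀ s ∈ Icc (0:ℝ) 1, F s ≤ s ^ m * h 0 * s := by
    intro s hs
    have hmono : ∀ τ ∈ Icc (0:ℝ) s, H τ ≤ s ^ m * h 0 := by
      intro τ hτ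
      have hτ1 : τ ∈ Icc (0:ℝ) 1 := ⟨hτ.1, hτ.2.trans hs.2⟩
      have := hanti h01 hτ1 hτ.1
      have hpow : τ ^ m ≤ s ^ m := pow_le_pow_left₀ hτ.1 hτ.2 m
      calc τ ^ m * h τ ≤ τ ^ m * h 0 :=
            mul_le_mul_of_nonneg_left this (pow_nonneg hτ.1 m)
        _ ≤ s ^ m * h 0 := mul_le_mul_of_nonneg_right hpow (hpos 0 h01)
    have hint := intervalIntegral.integral_mono_on hs.1
      (hH_int 0 s h01 hs) (intervalIntegrable_const) hmono
    rw [intervalIntegral.integral_const, smul_eq_mul, sub_zero] at hint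
    calc F s ≤ s * (s ^ m * h 0) := hint
      _ = s ^ m * h 0 * s := by ring
  have hA_upper : ∀ s ∈ Icc (0:ℝ) 1, A s ≤ h 0 * s := by
    intro s hs
    rcases hs.1.lt_or_eq with h0s | h0s
    · have hsm : 0 < s ^ m := pow_pos h0s m
      calc A s = (1 / s ^ m) * F s := rfl
        _ ≤ (1 / s ^ m) * (s ^ m * h 0 * s) :=
            mul_le_mul_of_nonneg_left (hF_upper s hs) (by positivity)
        _ = h 0 * s := by field_simp
    · rw [← h0s, hA0, mul_zero]
  have hA_cont : ContinuousOn A (Icc 0 1) := by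
    intro s hs
    rcases hs.1.lt_or_eq with h0s | h0s
    · exact ContinuousWithinAt.mul
        ((continuousAt_const.div ((continuous_pow m).continuousAt)
          (pow_ne_zero m h0s.ne')).continuousWithinAt)
        (hF_cont s hs)
    · rw [ContinuousWithinAt, ← h0s, hA0]
      apply tendsto_of_tendsto_of_tendsto_of_le_of_le'
        (tendsto_const_nhds (α := ℝ))
        (h := fun s => h 0 * s)
      · have : Filter.Tendsto (fun s : ℝ => h 0 * s) (nhds 0) (nhds (h 0 * 0)) :=
          (continuous_const.mul continuous_id).tendsto 0
        rw [mul_zero] at this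
        exact this.mono_left nhdsWithin_le_nhds
      · filter_upwards [self_mem_nhdsWithin] with x hx using hA_nonneg x hx
      · filter_upwards [self_mem_nhdsWithin] with x hx using hA_upper x hx
  set g : ℝ → ℝ := fun s => (A s) ^ q with hgdef
  have hg_nonneg : ∀ s ∈ Icc (0:ℝ) 1, 0 ≤ g s := fun s hs =>
    Real.rpow_nonneg (hA_nonneg s hs) q
  have hg_cont : ContinuousOn g (Icc 0 1) :=
    hA_cont.rpow_const (fun s hs => Or.inr hq.le)
  have hg_int : ∀ s t : ℝ, s ∈ Icc (0:ℝ) 1 → t ∈ Icc (0:ℝ) 1 →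
      IntervalIntegrable g MeasureTheory.volume s t := fun s t hs ht =>
    (hg_cont.mono (uIcc_subset_Icc hs ht)).intervalIntegrable
  have hT' : ∀ r ∈ Icc (0:ℝ) 1, T r = ∫ s in r..1, g s := by
    intro r hr
    rw [hT]
    apply intervalIntegral.integral_congr
    intro s hs
    have hs1 : s ∈ Icc (0:ℝ) 1 := uIcc_subset_Icc hr h11 hs
    exact pLapInv_of_nonneg hp1 (hA_nonneg s hs1)
  -- continuity of T
  have hT_cont : ContinuousOn T (Icc 0 1) := by
    have hbase : ContinuousOn (fun r => ∫ s in r..1, g s) (Icc 0 1) := by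
      have := intervalIntegral.continuousOn_primitive_interval_left
        (μ := MeasureTheory.volume) (a := (0:ℝ)) (b := 1)
        (f := g) (by
          rw [uIcc_of_le (zero_le_one : (0:ℝ) ≤ 1)]
          exact hg_cont.integrableOn_Icc)
      rwa [uIcc_of_le (zero_le_one : (0:ℝ) ≤ 1)] at this
    exact hbase.congr hT'
  -- nonnegativity of T
  have hT_nonneg : ∀ r ∈ Icc (0:ℝ) 1, 0 ≤ T r := by
    intro r hr
    rw [hT' r hr]
    exact intervalIntegral.integral_nonneg hr.2
      (fun s hs => hg_nonneg s ⟨hr.1.trans hs.1, hs.2⟩)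
  -- antitonicity of T
  have hT_anti : AntitoneOn T (Icc 0 1) := by
    intro r₁ h₁ r₂ h₂ h₁₂
    rw [hT' r₁ h₁, hT' r₂ h₂]
    have hadd := intervalIntegral.integral_add_adjacent_intervals
      (hg_int r₁ r₂ h₁ h₂) (hg_int r₂ 1 h₂ h11)
    have hnn : (0:ℝ) ≤ ∫ s in r₁..r₂, g s :=
      intervalIntegral.integral_nonneg h₁₂
        (fun s hs => hg_nonneg s ⟨h₁.1.trans hs.1, hs.2.trans h₂.2⟩)
    linarith
  refine ⟨hT_cont, hT_nonneg, hT_anti, ?_⟩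
  -- the Harnack-type lower bound
  set M : ℝ := F 1 with hMdef
  have hM : 0 ≤ M := hF_nonneg 1 h11
  -- Step 1 : a^n * M ≤ F a
  have hFa : a ^ n * M ≤ F a := by
    show a ^ n * F 1 ≤ F a
    have e1 : h a * (a ^ n / n) ≤ F a := by
      have hmono : ∀ τ ∈ Icc (0:ℝ) a, τ ^ m * h a ≤ H τ := by
        intro τ hτ
        have hτ1 : τ ∈ Icc (0:ℝ) 1 := ⟨hτ.1, hτ.2.trans ha1.le⟩
        exact mul_le_mul_of_nonneg_left (hanti hτ1 hamem hτ.2) (pow_nonneg hτ.1 m)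
      have hint := intervalIntegral.integral_mono_on ha.le
        (((continuous_pow m).continuousOn.mul continuousOn_const).mono
          (uIcc_subset_Icc h01 hamem)).intervalIntegrable
        (hH_int 0 a h01 hamem) hmono
      have hval : (∫ τ in (0:ℝ)..a, τ ^ m * h a) = h a * (a ^ n / n) := by
        rw [intervalIntegral.integral_mul_const, integral_pow]
        rw [hmn]
        have : ((m:ℝ) + 1) = (n:ℝ) := by rw [hmR]; ring
        rw [this, zero_pow (by omega : n ≠ 0)]
        ring
      simp only [Pi.mul_apply] at hint
      rw [hval] at hint
      exact hint
    have e2 : F 1 - F a ≤ h a * ((1 - a ^ n) / n) := by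
      have hadd := intervalIntegral.integral_add_adjacent_intervals
        (hH_int 0 a h01 hamem) (hH_int a 1 hamem h11)
      have hmono : ∀ τ ∈ Icc a 1, H τ ≤ τ ^ m * h a := by
        intro τ hτ
        have hτ1 : τ ∈ Icc (0:ℝ) 1 := ⟨ha.le.trans hτ.1, hτ.2⟩
        exact mul_le_mul_of_nonneg_left (hanti hamem hτ1 hτ.1)
          (pow_nonneg (ha.le.trans hτ.1) m)
      have hint := intervalIntegral.integral_mono_on ha1.le
        (hH_int a 1 hamem h11)
        (((continuous_pow m).continuousOn.mul continuousOn_const).mono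
          (uIcc_subset_Icc hamem h11)).intervalIntegrable hmono
      have hval : (∫ τ in a..1, τ ^ m * h a) = h a * ((1 - a ^ n) / n) := by
        rw [intervalIntegral.integral_mul_const, integral_pow]
        rw [hmn]
        have : ((m:ℝ) + 1) = (n:ℝ) := by rw [hmR]; ring
        rw [this, one_pow]
        ring
      simp only [Pi.mul_apply] at hint
      rw [hval] at hint
      have : F 1 = F a + ∫ τ in a..1, H τ := hadd.symm
      linarith
    have e3 : a ^ n ≤ 1 := pow_le_one₀ ha.le ha1.le
    have e4 : (0:ℝ) ≤ a ^ n := pow_nonneg ha.le n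
    have k1 : a ^ n * (F 1 - F a) ≤ (1 - a ^ n) * (h a * (a ^ n / (n:ℝ))) := by
      calc a ^ n * (F 1 - F a) ≤ a ^ n * (h a * ((1 - a ^ n) / (n:ℝ))) :=
            mul_le_mul_of_nonneg_left e2 e4
        _ = (1 - a ^ n) * (h a * (a ^ n / (n:ℝ))) := by ring
    have k2 : (1 - a ^ n) * (h a * (a ^ n / (n:ℝ))) ≤ (1 - a ^ n) * F a :=
      mul_le_mul_of_nonneg_left e1 (by linarith)
    calc a ^ n * F 1 = a ^ n * F a + a ^ n * (F 1 - F a) := by ring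
      _ ≤ a ^ n * F a + (1 - a ^ n) * (h a * (a ^ n / (n:ℝ))) := by linarith
      _ ≤ a ^ n * F a + (1 - a ^ n) * F a := by linarith
      _ = F a := by ring
  -- Step 2 : lower bound for g on [b,1]
  have hglow : ∀ s ∈ Icc b 1, (a ^ n * M) ^ q ≤ g s := by
    intro s hs
    have hs1 : s ∈ Icc (0:ℝ) 1 := ⟨hb0.le.trans hs.1, hs.2⟩
    have hs0 : 0 < s := hb0.trans_le hs.1
    have h1 : F a ≤ F s := hF_mono a s hamem hs1 (hab.trans hs.1)
    have h2 : F s ≤ A s := by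
      have hsm1 : s ^ m ≤ 1 := pow_le_one₀ hs0.le hs.2
      have hsm0 : 0 < s ^ m := pow_pos hs0 m
      have : (1:ℝ) ≤ 1 / s ^ m := by
        rw [le_div_iff₀ hsm0]; linarith
      calc F s = 1 * F s := (one_mul _).symm
        _ ≤ (1 / s ^ m) * F s :=
          mul_le_mul_of_nonneg_right this (hF_nonneg s hs1)
    exact Real.rpow_le_rpow (by positivity) (by linarith) hq.le
  -- Step 3 : (1-b) * (a^n M)^q ≤ T b
  have hTb : (1 - b) * (a ^ n * M) ^ q ≤ T b := by
    rw [hT' b hbmem]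
    have hint := intervalIntegral.integral_mono_on hb.le
      (intervalIntegrable_const) (hg_int b 1 hbmem h11)
      (fun s hs => hglow s hs)
    rw [intervalIntegral.integral_const, smul_eq_mul] at hint
    exact hint
  -- Step 4 : T 0 ≤ (p-1)/(p-n) * M^q
  set e : ℝ := (1 - (n:ℝ)) * q with hedef
  have he1 : -1 < e := by
    rw [hedef, hqdef]
    rw [show (1 - (n:ℝ)) * (1 / (p-1)) = (1 - (n:ℝ))/(p-1) by ring,
      lt_div_iff₀ hp0]
    linarith
  have he0 : 0 < e + 1 := by linarith
  have he_neg : e < 0 := by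
    rw [hedef]
    exact mul_neg_of_neg_of_pos (by linarith) hq
  have hT0 : T 0 ≤ (p - 1) / (p - (n:ℝ)) * M ^ q := by
    have hub : ∀ s ∈ Icc (0:ℝ) 1, g s ≤ s ^ e * M ^ q := by
      intro s hs
      rcases hs.1.lt_or_eq with h0s | h0s
      · have hFsM : F s ≤ M := hF_mono s 1 hs h11 hs.2
        have hpow : (1:ℝ) / s ^ m = s ^ ((1:ℝ) - n) := by
          rw [one_div, ← Real.rpow_natCast s m, ← Real.rpow_neg h0s.le, hmR,
            show -((n:ℝ) - 1) = 1 - (n:ℝ) by ring]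
        have hAle : A s ≤ s ^ ((1:ℝ) - n) * M := by
          rw [← hpow]
          exact mul_le_mul_of_nonneg_left hFsM (by positivity)
        calc g s = (A s) ^ q := rfl
          _ ≤ (s ^ ((1:ℝ) - n) * M) ^ q :=
            Real.rpow_le_rpow (hA_nonneg s hs) hAle hq.le
          _ = (s ^ ((1:ℝ) - n)) ^ q * M ^ q :=
            Real.mul_rpow (Real.rpow_nonneg h0s.le _) hM
          _ = s ^ e * M ^ q := by
            rw [← Real.rpow_mul h0s.le, ← hedef]
      · rw [← h0s]
        have : g 0 = 0 := by
          show (A 0) ^ q = 0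
          rw [hA0, Real.zero_rpow hq.ne']
        rw [this, Real.zero_rpow he_neg.ne, zero_mul]
    have hBint : IntervalIntegrable (fun s => s ^ e * M ^ q)
        MeasureTheory.volume 0 1 :=
      (intervalIntegral.intervalIntegrable_rpow' he1).mul_const _
    have hint := intervalIntegral.integral_mono_on zero_le_one
      (hg_int 0 1 h01 h11) hBint hub
    have hval : (∫ s in (0:ℝ)..1, s ^ e * M ^ q) =
        (p - 1) / (p - (n:ℝ)) * M ^ q := by
      rw [intervalIntegral.integral_mul_const, integral_rpow (Or.inl he1),
        Real.one_rpow, Real.zero_rpow he0.ne', sub_zero]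
      have h3 : e + 1 = (p - (n:ℝ)) / (p - 1) := by
        rw [hedef, hqdef]; field_simp; ring
      rw [h3, one_div_div]
    rw [hT' 0 h01]
    rw [hval] at hint
    exact hint
  -- sSup computation
  have hsup : sSup ((fun s => |T s|) '' Icc (0:ℝ) 1) = T 0 := by
    have hbound : ∀ y ∈ (fun s => |T s|) '' Icc (0:ℝ) 1, y ≤ T 0 := by
      rintro y ⟨s, hs, rfl⟩
      show |T s| ≤ T 0
      rw [abs_of_nonneg (hT_nonneg s hs)]
      exact hT_anti h01 hs hs.1
    refine le_antisymm
      (csSup_le ⟨|T 0|, ⟨0, h01, rfl⟩⟩ hbound)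
      (le_csSup ⟨T 0, hbound⟩ ⟨0, h01, abs_of_nonneg (hT_nonneg 0 h01)⟩)
  -- final chain
  intro r hr
  have hrmem : r ∈ Icc (0:ℝ) 1 := ⟨ha.le.trans hr.1, hr.2.trans hb.le⟩
  have hc_nonneg : 0 ≤ c := by
    rw [hc]
    apply mul_nonneg (mul_nonneg (div_nonneg hpn.le hp0.le) (by linarith))
      (Real.rpow_nonneg ha.le _)
  have step1 : c * sSup ((fun s => |T s|) '' Icc (0:ℝ) 1) ≤
      c * ((p - 1) / (p - (n:ℝ)) * M ^ q) := by
    rw [hsup]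
    exact mul_le_mul_of_nonneg_left hT0 hc_nonneg
  have step2 : c * ((p - 1) / (p - (n:ℝ)) * M ^ q) =
      (1 - b) * (a ^ n * M) ^ q := by
    rw [hc]
    have h1 : (a ^ n * M) ^ q = a ^ ((n:ℝ) * q) * M ^ q := by
      rw [Real.mul_rpow (pow_nonneg ha.le n) hM, ← Real.rpow_natCast a n,
        ← Real.rpow_mul ha.le]
    rw [h1]
    have h2 : (n:ℝ) / (p - 1) = (n:ℝ) * q := by rw [hqdef]; ring
    rw [h2]
    field_simp
  have step3 : T b ≤ T r := hT_anti hrmem hbmem hr.2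
  calc c * sSup ((fun s => |T s|) '' Icc (0:ℝ) 1)
      ≤ c * ((p - 1) / (p - (n:ℝ)) * M ^ q) := step1
    _ = (1 - b) * (a ^ n * M) ^ q := step2
    _ ≤ T b := hTb
    _ ≤ T r := step3

/-- **The operator `T = (T₁,T₂)` maps the cone `K = K₁ × K₂` into itself.**
Here `Kᵢ` consists of the nonnegative, nonincreasing continuous functions `v` on
`[0,1]` with `min_{[a,b]} v ≥ cᵢ ‖v‖_∞`, `cᵢ = ((pᵢ-n)/(pᵢ-1))(1-b)a^{n/(pᵢ-1)}`,
and `f₁, f₂ : ℝ₊² → ℝ₊` are continuous and nondecreasing. -/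
theorem stmt_15 (n : ℕ) (hn : 2 ≤ n) (p₁ p₂ : ℝ)
    (hp₁ : (n : ℝ) < p₁) (hp₂ : (n : ℝ) < p₂)
    (a b : ℝ) (ha : 0 < a) (hab : a ≤ b) (hb : b < 1)
    (c₁ c₂ : ℝ)
    (hc₁ : c₁ = (p₁ - n) / (p₁ - 1) * (1 - b) * a ^ ((n : ℝ) / (p₁ - 1)))
    (hc₂ : c₂ = (p₂ - n) / (p₂ - 1) * (1 - b) * a ^ ((n : ℝ) / (p₂ - 1)))
    (f₁ f₂ : ℝ → ℝ → ℝ)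
    (hf₁_cont : ContinuousOn (fun q : ℝ × ℝ => f₁ q.1 q.2) (Ici 0 ×ˢ Ici 0))
    (hf₂_cont : ContinuousOn (fun q : ℝ × ℝ => f₂ q.1 q.2) (Ici 0 ×ˢ Ici 0))
    (hf₁_nonneg : ∀ x y : ℝ, 0 ≤ x → 0 ≤ y → 0 ≤ f₁ x y)
    (hf₂_nonneg : ∀ x y : ℝ, 0 ≤ x → 0 ≤ y → 0 ≤ f₂ x y)
    (hf₁_mono : ∀ x₁ y₁ x₂ y₂ : ℝ, 0 ≤ x₁ → x₁ ≤ x₂ → 0 ≤ y₁ → y₁ ≤ y₂ →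
      f₁ x₁ y₁ ≤ f₁ x₂ y₂)
    (hf₂_mono : ∀ x₁ y₁ x₂ y₂ : ℝ, 0 ≤ x₁ → x₁ ≤ x₂ → 0 ≤ y₁ → y₁ ≤ y₂ →
      f₂ x₁ y₁ ≤ f₂ x₂ y₂)
    (u₁ u₂ : ℝ → ℝ)
    (hu₁_cont : ContinuousOn u₁ (Icc 0 1))
    (hu₁_nonneg : ∀ t ∈ Icc (0:ℝ) 1, 0 ≤ u₁ t)
    (hu₁_anti : AntitoneOn u₁ (Icc 0 1))
    (hu₁_min : ∀ t ∈ Icc a b, c₁ * sSup ((fun s => |u₁ s|) '' Icc (0:ℝ) 1) ≤ u₁ t)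
    (hu₂_cont : ContinuousOn u₂ (Icc 0 1))
    (hu₂_nonneg : ∀ t ∈ Icc (0:ℝ) 1, 0 ≤ u₂ t)
    (hu₂_anti : AntitoneOn u₂ (Icc 0 1))
    (hu₂_min : ∀ t ∈ Icc a b, c₂ * sSup ((fun s => |u₂ s|) '' Icc (0:ℝ) 1) ≤ u₂ t) :
    (ContinuousOn (radialT n p₁ f₁ u₁ u₂) (Icc 0 1) ∧
     (∀ r ∈ Icc (0:ℝ) 1, 0 ≤ radialT n p₁ f₁ u₁ u₂ r) ∧
     AntitoneOn (radialT n p₁ f₁ u₁ u₂) (Icc 0 1) ∧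
     (∀ r ∈ Icc a b,
       c₁ * sSup ((fun s => |radialT n p₁ f₁ u₁ u₂ s|) '' Icc (0:ℝ) 1) ≤
         radialT n p₁ f₁ u₁ u₂ r)) ∧
    (ContinuousOn (radialT n p₂ f₂ u₁ u₂) (Icc 0 1) ∧
     (∀ r ∈ Icc (0:ℝ) 1, 0 ≤ radialT n p₂ f₂ u₁ u₂ r) ∧
     AntitoneOn (radialT n p₂ f₂ u₁ u₂) (Icc 0 1) ∧
     (∀ r ∈ Icc a b,
       c₂ * sSup ((fun s => |radialT n p₂ f₂ u₁ u₂ s|) '' Icc (0:ℝ) 1) ≤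
         radialT n p₂ f₂ u₁ u₂ r)) := by
  have hmaps : MapsTo (fun t => (u₁ t, u₂ t)) (Icc (0:ℝ) 1) (Ici 0 ×ˢ Ici 0) :=
    fun t ht => ⟨hu₁_nonneg t ht, hu₂_nonneg t ht⟩
  have huv_cont : ContinuousOn (fun t => (u₁ t, u₂ t)) (Icc (0:ℝ) 1) :=
    hu₁_cont.prodMk hu₂_cont
  constructor
  · refine radialT_aux n hn p₁ hp₁ a b ha hab hb c₁ hc₁
      (fun τ => f₁ (u₁ τ) (u₂ τ)) ?_ ?_ ?_ (radialT n p₁ f₁ u₁ u₂) rfl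
    · exact hf₁_cont.comp huv_cont hmaps
    · exact fun t ht => hf₁_nonneg _ _ (hu₁_nonneg t ht) (hu₂_nonneg t ht)
    · intro t₁ h₁ t₂ h₂ h₁₂
      exact hf₁_mono _ _ _ _ (hu₁_nonneg t₂ h₂) (hu₁_anti h₁ h₂ h₁₂)
        (hu₂_nonneg t₂ h₂) (hu₂_anti h₁ h₂ h₁₂)
  · refine radialT_aux n hn p₂ hp₂ a b ha hab hb c₂ hc₂
      (fun τ => f₂ (u₁ τ) (u₂ τ)) ?_ ?_ ?_ (radialT n p₂ f₂ u₁ u₂) rfl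
    · exact hf₂_cont.comp huv_cont hmaps
    · exact fun t ht => hf₂_nonneg _ _ (hu₁_nonneg t ht) (hu₂_nonneg t ht)
    · intro t₁ h₁ t₂ h₂ h₁₂
      exact hf₂_mono _ _ _ _ (hu₁_nonneg t₂ h₂) (hu₁_anti h₁ h₂ h₁₂)
        (hu₂_nonneg t₂ h₂) (hu₂_anti h₁ h₂ h₁₂)
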